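/- Set h_c(r) := r²·g_c(r) = r²/2 − (μ/p)·C^p·c^{p(1−γ_p)/2}·r^{pγ_p} − r^{4*}/(4*·S^{4*/2}) for r ≥ 0, and r_* := r_{c_*}. Then g_{c_*}(r_*) = 0, and for every c with 0 < c < c_*: g_c(r_*) > 0 and h_c has exactly three zeros in [0,∞), namely 0, r₁ and r₂, with 0 < r₁ < r_* < r₂ < ∞. -/

import Mathlib

open Real Filter Set

private lemma aux_alg (a b A0 B α E cst rst : ℝ) (ha : a < 0) (hb : 0 < b)
    (hA : 0 < A0) (hB : 0 < B) (hα : 0 < α)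
    (hE : E = ((b - a) / (-a)) * ((-a) * A0 / b) ^ (b / (b - a)) * B ^ (a / (b - a)))
    (hc : cst = (1 / (2 * E)) ^ ((b - a) / (α * b)))
    (hr : rst = ((-a) * B * A0 * cst ^ α / b) ^ (1 / (b - a))) :
    0 < cst ∧ 0 < rst ∧ 1 / 2 - A0 * cst ^ α * rst ^ a - (1 / B) * rst ^ b = 0 := by
  have hna : (0:ℝ) < -a := by linarith
  have hba : (0:ℝ) < b - a := by linarith
  have hXpos : (0:ℝ) < (-a) * A0 / b := by positivity
  have hEpos : 0 < E := by
    rw [hE]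
    have h1 := Real.rpow_pos_of_pos hXpos (b / (b - a))
    have h2 := Real.rpow_pos_of_pos hB (a / (b - a))
    positivity
  have hcst : 0 < cst := by
    rw [hc]; exact Real.rpow_pos_of_pos (by positivity) _
  have hcα : 0 < cst ^ α := Real.rpow_pos_of_pos hcst _
  have hKpos : 0 < (-a) * B * A0 * cst ^ α / b := by positivity
  have hrst : 0 < rst := by rw [hr]; exact Real.rpow_pos_of_pos hKpos _
  have hra : rst ^ a = ((-a) * B * A0 * cst ^ α / b) ^ (a / (b - a)) := by
    rw [hr, ← Real.rpow_mul hKpos.le]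
    congr 1; ring
  have hrb : rst ^ b
      = ((-a) * B * A0 * cst ^ α / b) ^ (a / (b - a)) * ((-a) * B * A0 * cst ^ α / b) := by
    rw [hr, ← Real.rpow_mul hKpos.le,
      show (1/(b-a)) * b = a/(b-a) + 1 by field_simp; ring,
      Real.rpow_add hKpos, Real.rpow_one]
  have hKsplit : ((-a) * B * A0 * cst ^ α / b) ^ (a / (b - a))
      = ((-a) * A0 / b) ^ (a / (b - a)) * B ^ (a / (b - a)) * cst ^ (α * (a / (b - a))) := by
    rw [show (-a) * B * A0 * cst ^ α / b = ((-a) * A0 / b) * B * (cst ^ α) by ring,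
      Real.mul_rpow (by positivity) hcα.le, Real.mul_rpow hXpos.le hB.le,
      ← Real.rpow_mul hcst.le]
  refine ⟨hcst, hrst, ?_⟩
  rw [hra, hrb, hKsplit]
  set Xe := ((-a) * A0 / b) ^ (a / (b - a)) with hXe
  set Be := B ^ (a / (b - a)) with hBe
  have key1 : cst ^ α * cst ^ (α * (a / (b - a))) = cst ^ (α * b / (b - a)) := by
    rw [← Real.rpow_add hcst]; congr 1; field_simp; ring
  have key2 : cst ^ (α * b / (b - a)) = 1 / (2 * E) := by
    rw [hc, ← Real.rpow_mul (by positivity),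
      show ((b - a) / (α * b)) * (α * b / (b - a)) = 1 by
        field_simp, Real.rpow_one]
  have key3 : ((b - a) / b) * A0 * (Xe * Be) = E := by
    rw [hE, show b / (b - a) = a / (b - a) + 1 by field_simp; ring,
      Real.rpow_add hXpos, Real.rpow_one, ← hXe]
    field_simp [hb.ne', ha.ne]
  have collect : A0 * cst ^ α * (Xe * Be * cst ^ (α * (a / (b - a))))
      + (1 / B) * (Xe * Be * cst ^ (α * (a / (b - a))) * ((-a) * B * A0 * cst ^ α / b))
      = (((b - a) / b) * A0 * (Xe * Be)) * (cst ^ α * cst ^ (α * (a / (b - a)))) := by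
    field_simp
    ring
  rw [key1, key2, key3] at collect
  have : E * (1 / (2 * E)) = 1 / 2 := by field_simp
  linarith [collect, this]

private lemma aux_unimodal (a b D B t : ℝ) (ha : a < 0) (hb : 0 < b) (hD : 0 < D)
    (hB : 0 < B) (ht : 0 < t)
    (hGt0 : 0 < 1 / 2 - D * t ^ a - (1 / B) * t ^ b) :
    ∃ r1 r2 : ℝ, 0 < r1 ∧ r1 < t ∧ t < r2 ∧
      (1 / 2 - D * r1 ^ a - (1 / B) * r1 ^ b = 0) ∧
      (1 / 2 - D * r2 ^ a - (1 / B) * r2 ^ b = 0) ∧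
      ∀ r : ℝ, 0 < r → 1 / 2 - D * r ^ a - (1 / B) * r ^ b = 0 → r = r1 ∨ r = r2 := by
  set G : ℝ → ℝ := fun r => 1 / 2 - D * r ^ a - (1 / B) * r ^ b with hGdef
  have hGt : 0 < G t := hGt0
  have hba : (0:ℝ) < b - a := by linarith
  have hna : (0:ℝ) < -a := by linarith
  have hKm : (0:ℝ) < (-a) * D * B / b := by positivity
  set m : ℝ := ((-a) * D * B / b) ^ (1 / (b - a)) with hmdef
  have hm : 0 < m := Real.rpow_pos_of_pos hKm _
  have hmpow : m ^ (b - a) = (-a) * D * B / b := by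
    rw [hmdef, ← Real.rpow_mul hKm.le, one_div_mul_cancel hba.ne', Real.rpow_one]
  -- derivative
  have hderiv : ∀ r : ℝ, 0 < r →
      HasDerivAt G ((-a) * D * r ^ (a - 1) - (b / B) * r ^ (b - 1)) r := by
    intro r hr
    have h1 : HasDerivAt (fun x : ℝ => x ^ a) (a * r ^ (a - 1)) r :=
      Real.hasDerivAt_rpow_const (Or.inl hr.ne')
    have h2 : HasDerivAt (fun x : ℝ => x ^ b) (b * r ^ (b - 1)) r :=
      Real.hasDerivAt_rpow_const (Or.inl hr.ne')
    have h3 := ((hasDerivAt_const r ((1:ℝ)/2)).sub (h1.const_mul D)).sub (h2.const_mul (1/B))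
    have hval : (0 : ℝ) - D * (a * r ^ (a - 1)) - 1 / B * (b * r ^ (b - 1))
        = (-a) * D * r ^ (a - 1) - (b / B) * r ^ (b - 1) := by ring
    rw [hval] at h3
    exact h3
  have hcont : ∀ r : ℝ, 0 < r → ContinuousAt G r := by
    intro r hr
    have c1 : ContinuousAt (fun x : ℝ => x ^ a) r :=
      Real.continuousAt_rpow_const r a (Or.inl hr.ne')
    have c2 : ContinuousAt (fun x : ℝ => x ^ b) r :=
      Real.continuousAt_rpow_const r b (Or.inl hr.ne')
    exact (continuousAt_const.sub (continuousAt_const.mul c1)).sub (continuousAt_const.mul c2)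
  have hderiv_pos : ∀ r ∈ Ioo (0:ℝ) m, 0 < deriv G r := by
    intro r hr
    have hr0 : 0 < r := hr.1
    rw [(hderiv r hr0).deriv]
    have hlt : r ^ (b - a) < (-a) * D * B / b := by
      rw [← hmpow]; exact Real.rpow_lt_rpow hr0.le hr.2 hba
    have hra : 0 < r ^ (a - 1) := Real.rpow_pos_of_pos hr0 _
    have hsplit : r ^ (b - 1) = r ^ (a - 1) * r ^ (b - a) := by
      rw [← Real.rpow_add hr0]; ring_nf
    rw [hsplit]
    have h2 : (b / B) * (r ^ (a-1) * r ^ (b-a)) < (b / B) * (r ^ (a-1) * ((-a)*D*B/b)) := by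
      apply mul_lt_mul_of_pos_left (mul_lt_mul_of_pos_left hlt hra) (by positivity)
    have h3 : (b / B) * (r ^ (a-1) * ((-a)*D*B/b)) = (-a) * D * r ^ (a-1) := by
      field_simp
    linarith
  have hderiv_neg : ∀ r ∈ Ioi m, deriv G r < 0 := by
    intro r hr
    have hr0 : 0 < r := lt_trans hm hr
    rw [(hderiv r hr0).deriv]
    have hlt : (-a) * D * B / b < r ^ (b - a) := by
      rw [← hmpow]; exact Real.rpow_lt_rpow hm.le hr hba
    have hra : 0 < r ^ (a - 1) := Real.rpow_pos_of_pos hr0 _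
    have hsplit : r ^ (b - 1) = r ^ (a - 1) * r ^ (b - a) := by
      rw [← Real.rpow_add hr0]; ring_nf
    rw [hsplit]
    have h2 : (b / B) * (r ^ (a-1) * ((-a)*D*B/b)) < (b / B) * (r ^ (a-1) * r ^ (b-a)) := by
      apply mul_lt_mul_of_pos_left (mul_lt_mul_of_pos_left hlt hra) (by positivity)
    have h3 : (b / B) * (r ^ (a-1) * ((-a)*D*B/b)) = (-a) * D * r ^ (a-1) := by
      field_simp
    linarith
  have hmono : StrictMonoOn G (Ioc 0 m) := by
    apply strictMonoOn_of_deriv_pos (convex_Ioc 0 m)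
    · exact fun r hr => (hcont r hr.1).continuousWithinAt
    · intro r hr; rw [interior_Ioc] at hr; exact hderiv_pos r hr
  have hanti : StrictAntiOn G (Ici m) := by
    apply strictAntiOn_of_deriv_neg (convex_Ici m)
    · exact fun r hr => (hcont r (lt_of_lt_of_le hm hr)).continuousWithinAt
    · intro r hr; rw [interior_Ici] at hr; exact hderiv_neg r hr
  have hGm : 0 < G m := by
    rcases le_total t m with htm | hmt
    · exact lt_of_lt_of_le hGt (hmono.monotoneOn ⟨ht, htm⟩ ⟨hm, le_refl m⟩ htm)
    · exact lt_of_lt_of_le hGt (hanti.antitoneOn (le_refl m : m ∈ Ici m) hmt hmt)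
  set s : ℝ := min m t with hsdef
  have hs_pos : 0 < s := lt_min hm ht
  have hs_le_m : s ≤ m := min_le_left _ _
  have hs_le_t : s ≤ t := min_le_right _ _
  have hGs : 0 < G s := by
    rcases le_total m t with hmt | htm
    · rw [hsdef, min_eq_left hmt]; exact hGm
    · rw [hsdef, min_eq_right htm]; exact hGt
  set s' : ℝ := max m t with hs'def
  have hm_le_s' : m ≤ s' := le_max_left _ _
  have ht_le_s' : t ≤ s' := le_max_right _ _
  have hGs' : 0 < G s' := by
    rcases le_total m t with hmt | htm
    · rw [hs'def, max_eq_right hmt]; exact hGt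
    · rw [hs'def, max_eq_left htm]; exact hGm
  -- small endpoint
  have hD2 : (0:ℝ) < 1 / (2 * D) := by positivity
  set ε0 : ℝ := (1 / (2 * D)) ^ (1 / a) with hε0def
  have hε0 : 0 < ε0 := Real.rpow_pos_of_pos hD2 _
  set ε : ℝ := min (s / 2) (ε0 / 2) with hεdef
  have hε_pos : 0 < ε := lt_min (by positivity) (by positivity)
  have hε_lt_s : ε < s := lt_of_le_of_lt (min_le_left _ _) (by linarith)
  have hε_lt_ε0 : ε < ε0 := lt_of_le_of_lt (min_le_right _ _) (by linarith)
  have hGε : G ε < 0 := by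
    have hεa : 1 / (2 * D) < ε ^ a := by
      calc 1 / (2 * D) = ε0 ^ a := by
            rw [hε0def, ← Real.rpow_mul hD2.le, one_div_mul_cancel ha.ne, Real.rpow_one]
        _ < ε ^ a := Real.rpow_lt_rpow_of_neg hε_pos hε_lt_ε0 ha
    have h1 : D * (1 / (2 * D)) < D * ε ^ a := mul_lt_mul_of_pos_left hεa hD
    have h2 : D * (1 / (2 * D)) = 1 / 2 := by field_simp
    have h3 : 0 < (1 / B) * ε ^ b := by positivity
    have h4 : G ε = 1 / 2 - D * ε ^ a - (1 / B) * ε ^ b := rfl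
    rw [h4]; linarith
  -- big endpoint
  set M : ℝ := max (s' + 1) (B ^ (1 / b) + 1) with hMdef
  have hBb : 0 < B ^ (1 / b) := Real.rpow_pos_of_pos hB _
  have hM_gt_s' : s' < M := lt_of_lt_of_le (lt_add_one s') (le_max_left _ _)
  have hM_pos : 0 < M := lt_trans (lt_of_lt_of_le hs_pos (le_trans hs_le_t ht_le_s')) hM_gt_s'
  have hGM : G M < 0 := by
    have hMb : B < M ^ b := by
      have h1 : B ^ (1 / b) < M := lt_of_lt_of_le (lt_add_one _) (le_max_right _ _)
      calc B = (B ^ (1 / b)) ^ b := by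
            rw [← Real.rpow_mul hB.le, one_div_mul_cancel hb.ne', Real.rpow_one]
        _ < M ^ b := Real.rpow_lt_rpow hBb.le h1 hb
    have h1 : (1 / B) * B < (1 / B) * M ^ b := mul_lt_mul_of_pos_left hMb (by positivity)
    have h2 : (1 / B) * B = 1 := by field_simp
    have h3 : 0 < D * M ^ a := by positivity
    have h4 : G M = 1 / 2 - D * M ^ a - (1 / B) * M ^ b := rfl
    rw [h4]; linarith
  -- IVT
  have hcont1 : ContinuousOn G (Icc ε s) :=
    fun r hr => (hcont r (lt_of_lt_of_le hε_pos hr.1)).continuousWithinAt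
  obtain ⟨r1, hr1mem, hr1⟩ := intermediate_value_Ioo hε_lt_s.le hcont1 ⟨hGε, hGs⟩
  have hcont2 : ContinuousOn G (Icc s' M) :=
    fun r hr => (hcont r (lt_of_lt_of_le (lt_of_lt_of_le hs_pos (le_trans hs_le_t ht_le_s')) hr.1)).continuousWithinAt
  obtain ⟨r2, hr2mem, hr2⟩ := intermediate_value_Ioo' hM_gt_s'.le hcont2 ⟨hGM, hGs'⟩
  have hr1_pos : 0 < r1 := lt_trans hε_pos hr1mem.1
  have hr1_le_m : r1 ≤ m := le_of_lt (lt_of_lt_of_le hr1mem.2 hs_le_m)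
  have hr1_lt_t : r1 < t := lt_of_lt_of_le hr1mem.2 hs_le_t
  have hr2_gt_t : t < r2 := lt_of_le_of_lt ht_le_s' hr2mem.1
  have hr2_ge_m : m ≤ r2 := le_of_lt (lt_of_le_of_lt hm_le_s' hr2mem.1)
  refine ⟨r1, r2, hr1_pos, hr1_lt_t, hr2_gt_t, hr1, hr2, ?_⟩
  intro r hr hGr
  rcases le_or_gt r m with hrm | hrm
  · left
    exact hmono.injOn ⟨hr, hrm⟩ ⟨hr1_pos, hr1_le_m⟩ (by rw [show G r = 0 from hGr, hr1])
  · right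
    exact hanti.injOn (le_of_lt hrm) hr2_ge_m (by rw [show G r = 0 from hGr, hr2])

theorem stmt2
    (N : ℕ) (hN : 5 ≤ N)
    (p μ C S : ℝ)
    (hp1 : 2 < p) (hp2 : p < 2 + 4 / (N : ℝ))
    (hμ : 0 < μ) (hC : 0 < C) (hS : 0 < S) :
    let q : ℝ := 2 * (N : ℝ) / ((N : ℝ) - 4)
    let γ : ℝ := (N : ℝ) * (p - 2) / (4 * p)
    let g : ℝ → ℝ → ℝ := fun c r =>
      1 / 2 - (μ / p) * C ^ p * c ^ (p * (1 - γ) / 2) * r ^ (p * γ - 2)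
        - (1 / (q * S ^ (q / 2))) * r ^ (q - 2)
    let h : ℝ → ℝ → ℝ := fun c r =>
      r ^ 2 / 2 - (μ / p) * C ^ p * c ^ (p * (1 - γ) / 2) * r ^ (p * γ)
        - r ^ q / (q * S ^ (q / 2))
    let E : ℝ :=
      ((q - p * γ) / (2 - p * γ)) *
        ((2 - p * γ) * μ * C ^ p / ((q - 2) * p)) ^ ((q - 2) / (q - p * γ)) *
        (q * S ^ (q / 2)) ^ ((p * γ - 2) / (q - p * γ))
    let cstar : ℝ := (1 / (2 * E)) ^ (2 * (q - p * γ) / (p * (1 - γ) * (q - 2)))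
    let rstar : ℝ :=
      ((2 - p * γ) * μ * q * S ^ (q / 2) * C ^ p * cstar ^ (p * (1 - γ) / 2)
        / ((q - 2) * p)) ^ (1 / (q - p * γ))
    g cstar rstar = 0 ∧
    ∀ c : ℝ, 0 < c → c < cstar →
      0 < g c rstar ∧
      ∃ r1 r2 : ℝ, 0 < r1 ∧ r1 < rstar ∧ rstar < r2 ∧
        h c 0 = 0 ∧ h c r1 = 0 ∧ h c r2 = 0 ∧
        ∀ r : ℝ, 0 ≤ r → h c r = 0 → r = 0 ∨ r = r1 ∨ r = r2 := by
  intro q γ g h E cstar rstar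
  have hq_def : q = 2 * (N : ℝ) / ((N : ℝ) - 4) := rfl
  have hγ_def : γ = (N : ℝ) * (p - 2) / (4 * p) := rfl
  have hN5 : (5:ℝ) ≤ (N:ℝ) := by exact_mod_cast hN
  have hN4 : (0:ℝ) < (N:ℝ) - 4 := by linarith
  have hNpos : (0:ℝ) < (N:ℝ) := by linarith
  have hp0 : (0:ℝ) < p := by linarith
  have hq2 : 2 < q := by
    rw [hq_def, lt_div_iff₀ hN4]; linarith
  have hq0 : 0 < q := by linarith
  have hpγ_eq : p * γ = (N:ℝ) * (p - 2) / 4 := by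
    rw [hγ_def]; field_simp
  have hpγ_pos : 0 < p * γ := by
    rw [hpγ_eq]
    have : (0:ℝ) < p - 2 := by linarith
    positivity
  have hpγ_lt2 : p * γ < 2 := by
    have h2 : p - 2 < 4 / (N:ℝ) := by linarith
    have h3 : (N:ℝ) * (p - 2) < (N:ℝ) * (4 / (N:ℝ)) := mul_lt_mul_of_pos_left h2 hNpos
    have h4 : (N:ℝ) * (4 / (N:ℝ)) = 4 := by field_simp
    rw [hpγ_eq]; linarith
  have hγ_lt1 : γ < 1 := by
    have h5 : p * γ < p := lt_trans hpγ_lt2 hp1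
    nlinarith
  have hα_pos : 0 < p * (1 - γ) / 2 :=
    div_pos (mul_pos hp0 (by linarith)) two_pos
  have ha : p * γ - 2 < 0 := by linarith
  have hb : (0:ℝ) < q - 2 := by linarith
  have hba : (0:ℝ) < (q - 2) - (p * γ - 2) := by linarith
  have hB : 0 < q * S ^ (q / 2) :=
    mul_pos hq0 (Real.rpow_pos_of_pos hS _)
  have hA : 0 < (μ / p) * C ^ p :=
    mul_pos (div_pos hμ hp0) (Real.rpow_pos_of_pos hC _)
  -- rewrite the statement's constants in the aux_alg shape
  have e_exp : q - p * γ = (q - 2) - (p * γ - 2) := by ring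
  have e_neg : 2 - p * γ = -(p * γ - 2) := by ring
  have e_base : (2 - p * γ) * μ * C ^ p / ((q - 2) * p)
      = (-(p * γ - 2)) * ((μ / p) * C ^ p) / (q - 2) := by
    field_simp
    ring
  have hE_eq : E = (((q - 2) - (p * γ - 2)) / (-(p * γ - 2)))
      * ((-(p * γ - 2)) * ((μ / p) * C ^ p) / (q - 2)) ^ ((q - 2) / ((q - 2) - (p * γ - 2)))
      * (q * S ^ (q / 2)) ^ ((p * γ - 2) / ((q - 2) - (p * γ - 2))) := by
    show ((q - p * γ) / (2 - p * γ)) *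
        ((2 - p * γ) * μ * C ^ p / ((q - 2) * p)) ^ ((q - 2) / (q - p * γ)) *
        (q * S ^ (q / 2)) ^ ((p * γ - 2) / (q - p * γ)) = _
    rw [e_base, e_exp, e_neg]
  have hcst_eq : cstar = (1 / (2 * E)) ^ (((q - 2) - (p * γ - 2)) / ((p * (1 - γ) / 2) * (q - 2))) := by
    show (1 / (2 * E)) ^ (2 * (q - p * γ) / (p * (1 - γ) * (q - 2))) = _
    congr 1
    field_simp
    ring
  have hrst_eq : rstar = ((-(p * γ - 2)) * (q * S ^ (q / 2)) * ((μ / p) * C ^ p)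
      * cstar ^ (p * (1 - γ) / 2) / (q - 2)) ^ (1 / ((q - 2) - (p * γ - 2))) := by
    show ((2 - p * γ) * μ * q * S ^ (q / 2) * C ^ p * cstar ^ (p * (1 - γ) / 2)
        / ((q - 2) * p)) ^ (1 / (q - p * γ)) = _
    rw [e_exp]
    congr 1
    field_simp
    ring
  obtain ⟨hcst_pos, hrst_pos, hzero⟩ :=
    aux_alg (p * γ - 2) (q - 2) ((μ / p) * C ^ p) (q * S ^ (q / 2)) (p * (1 - γ) / 2)
      E cstar rstar ha hb hA hB hα_pos hE_eq hcst_eq hrst_eq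
  constructor
  · exact hzero
  · intro c hc hcc
    have hcα_lt : c ^ (p * (1 - γ) / 2) < cstar ^ (p * (1 - γ) / 2) :=
      Real.rpow_lt_rpow hc.le hcc hα_pos
    have hrsta : 0 < rstar ^ (p * γ - 2) := Real.rpow_pos_of_pos hrst_pos _
    have hgc : 0 < 1 / 2 - (μ / p) * C ^ p * c ^ (p * (1 - γ) / 2) * rstar ^ (p * γ - 2)
        - (1 / (q * S ^ (q / 2))) * rstar ^ (q - 2) := by
      have h1 : (μ / p) * C ^ p * c ^ (p * (1 - γ) / 2) * rstar ^ (p * γ - 2)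
          < (μ / p) * C ^ p * cstar ^ (p * (1 - γ) / 2) * rstar ^ (p * γ - 2) :=
        mul_lt_mul_of_pos_right (mul_lt_mul_of_pos_left hcα_lt hA) hrsta
      linarith [hzero]
    have hD : 0 < (μ / p) * C ^ p * c ^ (p * (1 - γ) / 2) :=
      mul_pos hA (Real.rpow_pos_of_pos hc _)
    obtain ⟨r1, r2, hr1_pos, hr1_lt, hr2_gt, hz1, hz2, huniq⟩ :=
      aux_unimodal (p * γ - 2) (q - 2) ((μ / p) * C ^ p * c ^ (p * (1 - γ) / 2))
        (q * S ^ (q / 2)) rstar ha hb hD hB hrst_pos hgc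
    -- bridge between h and g
    have hbridge : ∀ r : ℝ, 0 < r → h c r
        = r ^ 2 * (1 / 2 - (μ / p) * C ^ p * c ^ (p * (1 - γ) / 2) * r ^ (p * γ - 2)
          - (1 / (q * S ^ (q / 2))) * r ^ (q - 2)) := by
      intro r hr
      have e1 : (r:ℝ) ^ 2 * r ^ (p * γ - 2) = r ^ (p * γ) := by
        rw [← Real.rpow_two, ← Real.rpow_add hr]
        congr 1; ring
      have e2 : (r:ℝ) ^ 2 * r ^ (q - 2) = r ^ q := by
        rw [← Real.rpow_two, ← Real.rpow_add hr]
        congr 1; ring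
      show r ^ 2 / 2 - (μ / p) * C ^ p * c ^ (p * (1 - γ) / 2) * r ^ (p * γ)
        - r ^ q / (q * S ^ (q / 2)) = _
      rw [show r ^ 2 * (1 / 2 - (μ / p) * C ^ p * c ^ (p * (1 - γ) / 2) * r ^ (p * γ - 2)
          - (1 / (q * S ^ (q / 2))) * r ^ (q - 2))
        = r ^ 2 / 2 - (μ / p) * C ^ p * c ^ (p * (1 - γ) / 2) * (r ^ 2 * r ^ (p * γ - 2))
          - (r ^ 2 * r ^ (q - 2)) / (q * S ^ (q / 2)) from by ring, e1, e2]
    refine ⟨hgc, r1, r2, hr1_pos, hr1_lt, hr2_gt, ?_, ?_, ?_, ?_⟩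
    · show (0:ℝ) ^ 2 / 2 - (μ / p) * C ^ p * c ^ (p * (1 - γ) / 2) * (0:ℝ) ^ (p * γ)
        - (0:ℝ) ^ q / (q * S ^ (q / 2)) = 0
      rw [Real.zero_rpow hpγ_pos.ne', Real.zero_rpow hq0.ne']
      norm_num
    · rw [hbridge r1 hr1_pos, hz1, mul_zero]
    · rw [hbridge r2 (lt_trans hrst_pos hr2_gt), hz2, mul_zero]
    · intro r hr hhr
      rcases eq_or_lt_of_le hr with hr0 | hr0
      · exact Or.inl hr0.symm
      · right
        rw [hbridge r hr0] at hhr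
        rcases mul_eq_zero.mp hhr with h1 | h1
        · exact absurd h1 (pow_ne_zero 2 hr0.ne')
        · exact huniq r hr0 h1
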